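/- Let F be a field of characteristic zero and let α, t ∈ F with α ≠ 1 and t ≠ 0. Set A = α², B = (α−2)² (so that (A + B − 4)² − 4AB = 0), and x0 = −4(At−1)(Bt−1)/((A−B)²t). Then the identity x0·t·(x0 − t)·(x0 − 1)·(At−1)(Bt−1) = −[(α²t−1)((α−2)²t−1)((α²−2α+2)t−1)(α(α−2)t+1)]²/(64(α−1)⁶t²) holds. Consequently, over F(i) with i² = −1, the Jacobian elliptic fibration y² = x·t·(x−t)(x−1)(At−1)(Bt−1) admits the non-torsion section x = x0, y = ± i(α²t−1)((α−2)²t−1)((α²−2α+2)t−1)(α(α−2)t+1)/(8(α−1)³t). -/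

import Mathlib

set_option maxHeartbeats 1000000


/-- on the conic `(A+B−4)² − 4AB = 0`, parametrized by `A = α²`,
`B = (α−2)²`, the elliptic fibration `y² = x·t·(x−t)(x−1)(At−1)(Bt−1)` on the twisted
Legendre K3 surface admits (over `F(i)`) the non-torsion section with
`x = −4(At−1)(Bt−1)/((A−B)²t)`. -/
theorem stmt_17 (F : Type*) [Field F] [CharZero F] (α t : F)
    (hα : α ≠ 1) (ht : t ≠ 0) :
    let A := α ^ 2
    let B := (α - 2) ^ 2
    let x0 := -4 * (A * t - 1) * (B * t - 1) / ((A - B) ^ 2 * t)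
    ((A + B - 4) ^ 2 - 4 * A * B = 0) ∧
    x0 * t * (x0 - t) * (x0 - 1) * ((A * t - 1) * (B * t - 1)) =
      -((α ^ 2 * t - 1) * ((α - 2) ^ 2 * t - 1) * ((α ^ 2 - 2 * α + 2) * t - 1) *
          (α * (α - 2) * t + 1)) ^ 2 / (64 * (α - 1) ^ 6 * t ^ 2) ∧
    ∀ i : F, i ^ 2 = -1 → ∀ s : F, s = 1 ∨ s = -1 →
      (s * i * ((α ^ 2 * t - 1) * ((α - 2) ^ 2 * t - 1) * ((α ^ 2 - 2 * α + 2) * t - 1) *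
        (α * (α - 2) * t + 1)) / (8 * (α - 1) ^ 3 * t)) ^ 2 =
        x0 * t * (x0 - t) * (x0 - 1) * ((A * t - 1) * (B * t - 1)) := by
  intro A B x0
  have hα1 : α - 1 ≠ 0 := sub_ne_zero.mpr hα
  have hd : (16 * (α - 1) ^ 2 * t : F) ≠ 0 :=
    mul_ne_zero (mul_ne_zero (by norm_num) (pow_ne_zero _ hα1)) ht
  have hD : (64 * (α - 1) ^ 6 * t ^ 2 : F) ≠ 0 :=
    mul_ne_zero (mul_ne_zero (by norm_num) (pow_ne_zero _ hα1)) (pow_ne_zero _ ht)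
  have hx0 : x0 = -4 * ((α ^ 2 * t - 1) * ((α - 2) ^ 2 * t - 1)) /
      (16 * (α - 1) ^ 2 * t) := by
    show -4 * (A * t - 1) * (B * t - 1) / ((A - B) ^ 2 * t) = _
    simp only [A, B]
    congr 1
    · ring
    · ring
  have hAB : (A * t - 1) * (B * t - 1) =
      (α ^ 2 * t - 1) * ((α - 2) ^ 2 * t - 1) := rfl
  have key : x0 * t * (x0 - t) * (x0 - 1) * ((A * t - 1) * (B * t - 1)) =
      -((α ^ 2 * t - 1) * ((α - 2) ^ 2 * t - 1) * ((α ^ 2 - 2 * α + 2) * t - 1) *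
          (α * (α - 2) * t + 1)) ^ 2 / (64 * (α - 1) ^ 6 * t ^ 2) := by
    rw [hAB, hx0]
    rw [div_sub' hd, div_sub' hd, div_mul_eq_mul_div, div_mul_div_comm,
      div_mul_div_comm, div_mul_eq_mul_div,
      div_eq_div_iff (mul_ne_zero (mul_ne_zero hd hd) hd) hD]
    ring
  refine ⟨by simp only [A, B]; ring, key, ?_⟩
  rintro i hi s hs
  have hs2 : s ^ 2 = 1 := by rcases hs with h | h <;> simp [h]
  have h8 : (8 * (α - 1) ^ 3 * t : F) ≠ 0 :=
    mul_ne_zero (mul_ne_zero (by norm_num) (pow_ne_zero _ hα1)) ht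
  rw [key, div_pow, mul_pow, mul_pow, hs2, hi,
    div_eq_div_iff (pow_ne_zero _ h8) hD]
  ring
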